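/- In the categorical setting, combining [I_Y(θ)⁻¹]_{i,i} ≥ 1/[I_Y(θ)]_{i,i} (positive definite matrix diagonal inequality) with 1/[I_Y(θ)]_{i,i} ≥ θ_i yields [I_Y(θ)⁻¹]_{i,i} ≥ [I_Z(θ)⁻¹]_{i,i} = θ_i for all i. -/

import Mathlib

open Matrix

lemma diag_pos_of_posDef {n : ℕ} {A : Matrix (Fin n) (Fin n) ℝ} (hA : A.PosDef) (i : Fin n) :
    0 < A i i := by
  exact hA.diag_pos

lemma inv_diag_ge {n : ℕ} {A : Matrix (Fin n) (Fin n) ℝ} (hA : A.PosDef) (i : Fin n) :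
    1 / A i i ≤ A⁻¹ i i := by
  have hinv : A⁻¹.PosDef := hA.inv
  have hB : 0 < A⁻¹ i i := diag_pos_of_posDef hinv i
  have hAii : 0 < A i i := diag_pos_of_posDef hA i
  set e : Fin n → ℝ := Pi.single i 1 with he
  set y : Fin n → ℝ := A⁻¹ *ᵥ e with hy
  have hAy : A *ᵥ y = e := by
    rw [hy, mulVec_mulVec, Matrix.mul_nonsing_inv _ ((Matrix.isUnit_iff_isUnit_det A).mp hA.isUnit),
      one_mulVec]
  set c : ℝ := 1 / (A⁻¹ i i) with hc
  have key : 0 ≤ (e - c • y) ⬝ᵥ (A *ᵥ (e - c • y)) := by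
    have := hA.posSemidef.dotProduct_mulVec_nonneg (e - c • y)
    simpa using this
  have hsym : y ⬝ᵥ (A *ᵥ e) = 1 := by
    have hAt : Aᵀ = A := by
      rw [← conjTranspose_eq_transpose_of_trivial, hA.1.eq]
    have h1 : y ⬝ᵥ (A *ᵥ e) = (A *ᵥ y) ⬝ᵥ e := by
      rw [dotProduct_mulVec, ← mulVec_transpose, hAt]
    rw [h1, hAy, he, single_dotProduct, Pi.single_eq_same, one_mul]
  have hee : e ⬝ᵥ (A *ᵥ e) = A i i := by
    rw [he, mulVec_single, single_dotProduct]
    simp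
  have hey : e ⬝ᵥ e = 1 := by simp [he, dotProduct_single, Pi.single_eq_same]
  have hye : y ⬝ᵥ e = A⁻¹ i i := by
    rw [he, dotProduct_single, mul_one, hy, mulVec_single]
    simp [mulVec, dotProduct_single]
  have expand : (e - c • y) ⬝ᵥ (A *ᵥ (e - c • y)) = A i i - 2 * c + c ^ 2 * (A⁻¹ i i) := by
    simp only [mulVec_sub, mulVec_smul, hAy, sub_dotProduct, dotProduct_sub, smul_dotProduct,
      dotProduct_smul, hee, hey, hsym, hye, smul_eq_mul]
    ring
  rw [expand, hc] at key
  have h2 : (1 / A⁻¹ i i) ^ 2 * A⁻¹ i i = 1 / A⁻¹ i i := by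
    rw [one_div, sq, mul_assoc, inv_mul_cancel₀ hB.ne', mul_one]
  rw [one_div_le hAii hB]
  linarith


/-- In the categorical setting, if the indirect-observation Fisher information matrix
`[I_Y(θ)]_{i₁,i₂} = ∑ j, T j i₁ * T j i₂ / φ j` is positive definite, then
`[I_Y(θ)⁻¹]_{i,i} ≥ [I_Z(θ)⁻¹]_{i,i} = θ i` for all `i`,
where `I_Z(θ) = diag(1/θ i)`. -/
theorem indirect_asymptotic_variance_ge_theta
    (KZ KY : ℕ) (θ : Fin KZ → ℝ) (T : Fin KY → Fin KZ → ℝ) (φ : Fin KY → ℝ)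
    (hθpos : ∀ i, 0 < θ i) (hθsum : ∑ i, θ i = 1)
    (hTnn : ∀ j i, 0 ≤ T j i) (hTstoch : ∀ i, ∑ j, T j i = 1)
    (hφ : ∀ j, φ j = ∑ i, T j i * θ i) (hφpos : ∀ j, 0 < φ j)
    (IY : Matrix (Fin KZ) (Fin KZ) ℝ)
    (hIY : ∀ i₁ i₂, IY i₁ i₂ = ∑ j, T j i₁ * T j i₂ / φ j)
    (hpd : IY.PosDef) :
    ∀ i : Fin KZ,
      IY⁻¹ i i ≥ θ i ∧ (Matrix.diagonal (fun i => 1 / θ i))⁻¹ i i = θ i := by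
  intro i
  constructor
  · -- IY i i ≤ 1 / θ i
    have hIYpos : 0 < IY i i := diag_pos_of_posDef hpd i
    have hbound : IY i i ≤ 1 / θ i := by
      rw [hIY i i]
      have hterm : ∀ j, T j i * T j i / φ j ≤ T j i / θ i := by
        intro j
        have hφT : T j i * θ i ≤ φ j := by
          rw [hφ j]
          exact Finset.single_le_sum (f := fun k => T j k * θ k)
            (fun k _ => mul_nonneg (hTnn j k) (hθpos k).le) (Finset.mem_univ i)
        rw [div_le_div_iff₀ (hφpos j) (hθpos i)]
        calc T j i * T j i * θ i = T j i * (T j i * θ i) := by ring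
          _ ≤ T j i * φ j := mul_le_mul_of_nonneg_left hφT (hTnn j i)
      calc ∑ j, T j i * T j i / φ j ≤ ∑ j, T j i / θ i := Finset.sum_le_sum fun j _ => hterm j
        _ = (∑ j, T j i) / θ i := by rw [Finset.sum_div]
        _ = 1 / θ i := by rw [hTstoch i]
    have h1 : θ i ≤ 1 / IY i i := by
      rw [le_one_div hIYpos (hθpos i)] at *
      exact hbound
    exact le_trans h1 (inv_diag_ge hpd i)
  · have : (Matrix.diagonal fun i => 1 / θ i)⁻¹ = Matrix.diagonal θ := by
      apply Matrix.inv_eq_right_inv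
      rw [Matrix.diagonal_mul_diagonal]
      have : (fun i => 1 / θ i * θ i) = fun _ => (1 : ℝ) := by
        funext k; field_simp [(hθpos k).ne']
      rw [this, Matrix.diagonal_one]
    rw [this, Matrix.diagonal_apply_eq]
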